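/- Let (Γ, Λ) be a matched pair of discrete groups with Λ-action h·x and Γ-restriction h|_x, let B be a Fell bundle over Γ with compatible Λ-action β, and suppose (π, M) is a covariant pair: π a *-representation of B on a Hilbert space H, M a unitary representation of Λ on H, with M_h π(b) = π(β(h,b)) M_{h|_{p(b)}} for all h, b. Then for finitely supported sections σ of B ⋈_β Λ, the map L(σ) = Σ_{(x,h)} π(σ_B(x,h)) M_h is a *-homomorphism from the convolution *-algebra of finitely supported sections of B ⋈_β Λ to B(H), i.e. L(σ □ τ) = L(σ)L(τ) and L(σ*) = L(σ)*, where σ_B(x,h) ∈ B_x denotes the B-component of σ(x,h). -/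

import Mathlib

/-- A matched pair of (discrete) groups `(Γ, Λ)`: a left `Λ`-action
`act : Λ → Γ → Γ` (written `h·x`) and a `Γ`-restriction `res : Λ → Γ → Λ`
(written `h|_x`) satisfying the Zappa–Szép axioms (ZS1)–(ZS9). -/
structure MatchedPairGrp (Γ Λ : Type*) [Group Γ] [Group Λ] where
  act : Λ → Γ → Γ
  res : Λ → Γ → Λ
  mul_act : ∀ g h x, act (g * h) x = act g (act h x)
  one_act : ∀ x, act 1 x = x
  act_one : ∀ h, act h 1 = 1
  res_one : ∀ h, res h 1 = h
  one_res : ∀ x, res 1 x = 1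
  res_mul : ∀ h x y, res h (x * y) = res (res h x) y
  act_mul : ∀ h x y, act h (x * y) = act h x * act (res h x) y
  mul_res : ∀ g h x, res (g * h) x = res g (act h x) * res h x

namespace MatchedPairGrp

variable {Γ Λ : Type*} [Group Γ] [Group Λ] (M : MatchedPairGrp Γ Λ)

theorem act_act_inv (h : Λ) (x : Γ) : M.act h (M.act h⁻¹ x) = x := by
  rw [← M.mul_act, mul_inv_cancel, M.one_act]

theorem res_act_inv (k : Λ) (z : Γ) :
    M.res k (M.act k⁻¹ z) = (M.res k⁻¹ z)⁻¹ := by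
  have h0 := M.mul_res k k⁻¹ z
  rw [mul_inv_cancel, M.one_res] at h0
  exact eq_inv_of_mul_eq_one_left h0.symm

theorem inv_act_eq (h : Λ) (x : Γ) :
    (M.act h x)⁻¹ = M.act (M.res h x) x⁻¹ := by
  have e : M.act h x * M.act (M.res h x) x⁻¹ = 1 := by
    rw [← M.act_mul, mul_inv_cancel, M.act_one]
  exact inv_eq_of_mul_eq_one_right e

/-- The base point of `σ*(x,h)` in the Zappa–Szép product bundle is again `x`. -/
theorem zs_star_base (x : Γ) (h : Λ) :
    M.act (M.res h⁻¹ x⁻¹)⁻¹ (M.act h⁻¹ x⁻¹)⁻¹ = x := by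
  rw [inv_act_eq M h⁻¹ x⁻¹, inv_inv, ← M.mul_act, inv_mul_cancel, M.one_act]

/-- Multiplication of the Zappa–Szép product group `Γ ⋈ Λ` (on `Γ × Λ`):
`(x,h)(y,k) = (x (h·y), h|_y k)`. -/
def zmul (p q : Γ × Λ) : Γ × Λ := (p.1 * M.act p.2 q.1, M.res p.2 q.1 * q.2)

/-- Inversion of the Zappa–Szép product group:
`(x,h)⁻¹ = (h⁻¹·x⁻¹, h⁻¹|_{x⁻¹})`. -/
def zinv (p : Γ × Λ) : Γ × Λ := (M.act p.2⁻¹ p.1⁻¹, M.res p.2⁻¹ p.1⁻¹)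

theorem res_inv_act (m : Λ) (x : Γ) :
    M.res m⁻¹ (M.act m x) = (M.res m x)⁻¹ := by
  have h0 := M.mul_res m⁻¹ m x
  rw [inv_mul_cancel, M.one_res] at h0
  exact eq_inv_of_mul_eq_one_left h0.symm

theorem zmul_zinv_cancel_left (p q : Γ × Λ) :
    M.zmul p (M.zmul (M.zinv p) q) = q := by
  obtain ⟨y, k⟩ := p
  obtain ⟨x, h⟩ := q
  simp only [zmul, zinv]
  have hw : M.act k (M.act k⁻¹ y⁻¹) = y⁻¹ := M.act_act_inv k y⁻¹
  have hm : M.res k (M.act k⁻¹ y⁻¹) = (M.res k⁻¹ y⁻¹)⁻¹ := M.res_act_inv k y⁻¹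
  refine Prod.ext ?_ ?_
  · show y * M.act k (M.act k⁻¹ y⁻¹ * M.act (M.res k⁻¹ y⁻¹) x) = x
    rw [M.act_mul, hw, hm, ← M.mul_act, inv_mul_cancel, M.one_act, mul_inv_cancel_left]
  · show M.res k (M.act k⁻¹ y⁻¹ * M.act (M.res k⁻¹ y⁻¹) x) * (M.res (M.res k⁻¹ y⁻¹) x * h) = h
    rw [M.res_mul, hm, res_inv_act, inv_mul_cancel_left]

end MatchedPairGrp

/-- A Fell bundle over the discrete group `Γ`, in fibred form: Banach-space
fibres `B x`, multiplication `B_x × B_y → B_{xy}`, involution `B_x → B_{x⁻¹}`,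
with axioms (F1)–(F9); cross-fibre equalities are stated via `HEq`. -/
structure FellBdlGrp (Γ : Type*) [Group Γ] (B : Γ → Type*)
    [∀ x, NormedAddCommGroup (B x)] [∀ x, NormedSpace ℂ (B x)] where
  fmul : ∀ {x y : Γ}, B x → B y → B (x * y)
  fstar : ∀ {x : Γ}, B x → B x⁻¹
  fmul_add : ∀ {x y : Γ} (a : B x) (b c : B y), fmul a (b + c) = fmul a b + fmul a c
  add_fmul : ∀ {x y : Γ} (a b : B x) (c : B y), fmul (a + b) c = fmul a c + fmul b c
  smul_fmul : ∀ {x y : Γ} (z : ℂ) (a : B x) (b : B y), fmul (z • a) b = z • fmul a b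
  fmul_smul : ∀ {x y : Γ} (z : ℂ) (a : B x) (b : B y), fmul a (z • b) = z • fmul a b
  fmul_assoc : ∀ {x y z : Γ} (a : B x) (b : B y) (c : B z),
    HEq (fmul (fmul a b) c) (fmul a (fmul b c))
  norm_fmul_le : ∀ {x y : Γ} (a : B x) (b : B y), ‖fmul a b‖ ≤ ‖a‖ * ‖b‖
  fstar_add : ∀ {x : Γ} (a b : B x), fstar (a + b) = fstar a + fstar b
  fstar_smul : ∀ {x : Γ} (z : ℂ) (a : B x), fstar (z • a) = (starRingEnd ℂ z) • fstar a
  fstar_fmul : ∀ {x y : Γ} (a : B x) (b : B y),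
    HEq (fstar (fmul a b)) (fmul (fstar b) (fstar a))
  fstar_fstar : ∀ {x : Γ} (a : B x), HEq (fstar (fstar a)) a
  norm_fstar : ∀ {x : Γ} (a : B x), ‖fstar a‖ = ‖a‖
  norm_fstar_fmul : ∀ {x : Γ} (a : B x), ‖fmul (fstar a) a‖ = ‖a‖ ^ 2

/-- A `(Γ,Λ)`-compatible `Λ`-action `β` on a Fell bundle over `Γ`,
satisfying (A1)–(A5). -/
structure CompatGrp {Γ Λ : Type*} [Group Γ] [Group Λ] (M : MatchedPairGrp Γ Λ)
    (B : Γ → Type*) [∀ x, NormedAddCommGroup (B x)] [∀ x, NormedSpace ℂ (B x)]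
    (F : FellBdlGrp Γ B) where
  β : ∀ (h : Λ) {x : Γ}, B x → B (M.act h x)
  β_add : ∀ (h : Λ) {x : Γ} (a b : B x), β h (a + b) = β h a + β h b
  β_smul : ∀ (h : Λ) {x : Γ} (z : ℂ) (a : B x), β h (z • a) = z • β h a
  β_mul : ∀ (g h : Λ) {x : Γ} (a : B x), HEq (β (g * h) a) (β g (β h a))
  β_one : ∀ {x : Γ} (a : B x), HEq (β 1 a) a
  β_fmul : ∀ (h : Λ) {x y : Γ} (a : B x) (b : B y),
    HEq (β h (F.fmul a b)) (F.fmul (β h a) (β (M.res h x) b))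
  β_fstar : ∀ (h : Λ) {x : Γ} (a : B x),
    HEq (F.fstar (β h a)) (β (M.res h x) (F.fstar a))

section Sections

open MatchedPairGrp

variable {Γ Λ : Type*} [Group Γ] [Group Λ] (M : MatchedPairGrp Γ Λ)
  (B : Γ → Type*) [∀ x, NormedAddCommGroup (B x)] [∀ x, NormedSpace ℂ (B x)]
  (F : FellBdlGrp Γ B) (A : CompatGrp M B F)

/-- Convolution of (finitely supported) sections of the Fell bundle `B` over
the discrete group `Γ`: `(σ □ τ)(x) = Σ_y σ(y) τ(y⁻¹x)`. -/
noncomputable def convB (σ τ : ∀ x : Γ, B x) : ∀ x : Γ, B x :=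
  fun x => ∑ᶠ y : Γ,
    cast (congrArg B (mul_inv_cancel_left y x)) (F.fmul (σ y) (τ (y⁻¹ * x)))

/-- Involution of sections of `B`: `σ*(x) = σ(x⁻¹)*`. -/
def starB (σ : ∀ x : Γ, B x) : ∀ x : Γ, B x :=
  fun x => cast (congrArg B (inv_inv x)) (F.fstar (σ x⁻¹))

/-- A section of the Zappa–Szép product bundle `B ⋈_β Λ` over `Γ ⋈ Λ` is
recorded by its `B`-component: over `(x,h)` the fibre is `B x`.
Convolution of sections of `B ⋈_β Λ`:
`(σ □ τ)(ε) = Σ_φ σ(φ) • τ(φ⁻¹ε)`, where `•` is the Zappa–Szép bundle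
multiplication `(a,g) • (b,h) = (a β_g(b), g|_{p(b)} h)`. -/
noncomputable def convC (σ τ : ∀ p : Γ × Λ, B p.1) : ∀ p : Γ × Λ, B p.1 :=
  fun ε => ∑ᶠ φ : Γ × Λ,
    cast (congrArg (fun p : Γ × Λ => B p.1) (M.zmul_zinv_cancel_left φ ε))
      (F.fmul (σ φ) (A.β φ.2 (τ (M.zmul (M.zinv φ) ε))))

/-- Involution of sections of `B ⋈_β Λ`: `σ*(ε) = σ(ε⁻¹)*`, where for
`b ∈ B_x`, `(b,h)* = (β_{h⁻¹}(b*), h⁻¹|_{x⁻¹})`. -/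
def starC (σ : ∀ p : Γ × Λ, B p.1) : ∀ p : Γ × Λ, B p.1 :=
  fun ε => cast (congrArg B (M.zs_star_base ε.1 ε.2))
    (A.β (M.res ε.2⁻¹ ε.1⁻¹)⁻¹ (F.fstar (σ (M.zinv ε))))

end Sections

namespace MatchedPairGrp

variable {Γ Λ : Type*} [Group Γ] [Group Λ] (M : MatchedPairGrp Γ Λ)

theorem zinv_zinv (p : Γ × Λ) : M.zinv (M.zinv p) = p := by
  obtain ⟨x, h⟩ := p
  refine Prod.ext (M.zs_star_base x h) ?_
  show M.res (M.res h⁻¹ x⁻¹)⁻¹ (M.act h⁻¹ x⁻¹)⁻¹ = h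
  rw [inv_act_eq M h⁻¹ x⁻¹, inv_inv, res_inv_act, ← M.res_mul, inv_mul_cancel,
    M.res_one, inv_inv]

theorem zinv_zmul_cancel_left (p q : Γ × Λ) :
    M.zmul (M.zinv p) (M.zmul p q) = q := by
  have h := M.zmul_zinv_cancel_left (M.zinv p) q
  rwa [M.zinv_zinv] at h

theorem zmul_left_injective (p : Γ × Λ) : Function.Injective (M.zmul p) := by
  intro a b hab
  have := congrArg (M.zmul (M.zinv p)) hab
  rwa [M.zinv_zmul_cancel_left, M.zinv_zmul_cancel_left] at this

theorem zinv_injective : Function.Injective (M.zinv (Γ := Γ) (Λ := Λ)) :=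
  Function.LeftInverse.injective M.zinv_zinv

end MatchedPairGrp
section Stmt19

variable {Γ Λ : Type*} [Group Γ] [Group Λ]
  (B : Γ → Type*) [∀ x, NormedAddCommGroup (B x)] [∀ x, NormedSpace ℂ (B x)]
  {Hs : Type*} [NormedAddCommGroup Hs] [InnerProductSpace ℂ Hs] [CompleteSpace Hs]

/-- The integrated form of a covariant pair `(π, M)`:
`L(σ) = Σ_{(x,h)} π(σ_B(x,h)) M_h` (a finite sum for finitely supported
sections; `∑ᶠ` vanishes otherwise). -/
noncomputable def Lrep (π : ∀ x : Γ, B x → (Hs →L[ℂ] Hs))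
    (Mrep : Λ → (Hs →L[ℂ] Hs)) (σ : ∀ p : Γ × Λ, B p.1) : Hs →L[ℂ] Hs :=
  ∑ᶠ p : Γ × Λ, (π p.1 (σ p)) * Mrep p.2

/-- Let `(Γ, Λ)` be a matched pair of discrete groups and `B` a Fell bundle
over `Γ` with compatible `Λ`-action `β`.  If `(π, M)` is a covariant pair — a
`*`-representation `π` of `B` and a unitary representation `M` of `Λ` on a
Hilbert space with `M_h π(b) = π(β(h,b)) M_{h|_{p(b)}}` — then the integrated
form `L(σ) = Σ π(σ_B(x,h)) M_h` is a `*`-homomorphism on the convolution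
`*`-algebra of finitely supported sections of `B ⋈_β Λ`:
`L(σ □ τ) = L(σ) L(τ)` and `L(σ*) = L(σ)*`. -/
theorem integrated_form_star_hom (M : MatchedPairGrp Γ Λ)
    (F : FellBdlGrp Γ B) (A : CompatGrp M B F)
    (π : ∀ x : Γ, B x → (Hs →L[ℂ] Hs))
    (hπ_add : ∀ (x : Γ) (a b : B x), π x (a + b) = π x a + π x b)
    (hπ_smul : ∀ (x : Γ) (z : ℂ) (a : B x), π x (z • a) = z • π x a)
    (hπ_mul : ∀ (x y : Γ) (a : B x) (b : B y),
      π (x * y) (F.fmul a b) = π x a * π y b)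
    (hπ_star : ∀ (x : Γ) (a : B x),
      π x⁻¹ (F.fstar a) = ContinuousLinearMap.adjoint (π x a))
    (hπ_norm : ∀ (x : Γ) (a : B x), ‖π x a‖ ≤ ‖a‖)
    (Mrep : Λ → (Hs →L[ℂ] Hs))
    (hM_mul : ∀ g h : Λ, Mrep (g * h) = Mrep g * Mrep h)
    (hM_one : Mrep 1 = 1)
    (hM_star : ∀ h : Λ, ContinuousLinearMap.adjoint (Mrep h) = Mrep h⁻¹)
    (hcov : ∀ (h : Λ) (x : Γ) (b : B x),
      Mrep h * π x b = π (M.act h x) (A.β h b) * Mrep (M.res h x))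
    (σ τ : ∀ p : Γ × Λ, B p.1)
    (hσ : {p : Γ × Λ | σ p ≠ 0}.Finite) (hτ : {p : Γ × Λ | τ p ≠ 0}.Finite) :
    Lrep B π Mrep (convC M B F A σ τ) = Lrep B π Mrep σ * Lrep B π Mrep τ ∧
    Lrep B π Mrep (starC M B F A σ) =
      ContinuousLinearMap.adjoint (Lrep B π Mrep σ) := by
  classical
  -- zero lemmas
  have hπ0 : ∀ x : Γ, π x (0 : B x) = 0 := by
    intro x
    have h := hπ_smul x 0 0
    simpa using h
  have fmul0l : ∀ {x y : Γ} (b : B y), F.fmul (0 : B x) b = 0 := by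
    intro x y b
    have h := F.smul_fmul (0 : ℂ) (0 : B x) b
    simpa using h
  have fmul0r : ∀ {x y : Γ} (a : B x), F.fmul a (0 : B y) = 0 := by
    intro x y a
    have h := F.fmul_smul (0 : ℂ) a (0 : B y)
    simpa using h
  have β0 : ∀ (h : Λ) (x : Γ), A.β h (0 : B x) = 0 := by
    intro h x
    have h' := A.β_smul h (0 : ℂ) (0 : B x)
    simpa using h'
  have cast0 : ∀ {x y : Γ}, x = y → ∀ (h : B x = B y), cast h (0 : B x) = 0 := by
    intro x y hxy h
    subst hxy
    exact eq_of_heq (cast_heq h 0)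
  have pi_cast : ∀ {x y : Γ}, x = y → ∀ (h : B x = B y) (a : B x),
      π y (cast h a) = π x a := by
    intro x y hxy h a
    subst hxy
    rw [eq_of_heq (cast_heq h a)]
  set f : Γ × Λ → (Hs →L[ℂ] Hs) := fun p => π p.1 (σ p) * Mrep p.2 with hf
  set g : Γ × Λ → (Hs →L[ℂ] Hs) := fun p => π p.1 (τ p) * Mrep p.2 with hg
  set sσ : Finset (Γ × Λ) := hσ.toFinset with hsσ
  set sτ : Finset (Γ × Λ) := hτ.toFinset with hsτ
  set E : Finset (Γ × Λ) :=
    Finset.image (fun pq : (Γ × Λ) × (Γ × Λ) => M.zmul pq.1 pq.2) (sσ ×ˢ sτ) with hE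
  have hf0 : ∀ p : Γ × Λ, σ p = 0 → f p = 0 := by
    intro p hp
    simp [hf, hp, hπ0]
  have hg0 : ∀ p : Γ × Λ, τ p = 0 → g p = 0 := by
    intro p hp
    simp [hg, hp, hπ0]
  have hLσ : Lrep B π Mrep σ = ∑ p ∈ sσ, f p := by
    refine finsum_eq_finset_sum_of_support_subset _ ?_
    intro p hp
    simp only [hsσ, Finset.coe_sort_coe, Set.Finite.coe_toFinset, Set.mem_setOf_eq]
    intro h0
    exact hp (hf0 p h0)
  have hLτ : Lrep B π Mrep τ = ∑ p ∈ sτ, g p := by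
    refine finsum_eq_finset_sum_of_support_subset _ ?_
    intro p hp
    simp only [hsτ, Finset.coe_sort_coe, Set.Finite.coe_toFinset, Set.mem_setOf_eq]
    intro h0
    exact hp (hg0 p h0)
  -- the generic convolution summand
  have term_zero : ∀ (φ ε : Γ × Λ), σ φ = 0 ∨ τ (M.zmul (M.zinv φ) ε) = 0 →
      cast (congrArg (fun p : Γ × Λ => B p.1) (M.zmul_zinv_cancel_left φ ε))
        (F.fmul (σ φ) (A.β φ.2 (τ (M.zmul (M.zinv φ) ε)))) = 0 := by
    intro φ ε h
    have hxy : (M.zmul φ (M.zmul (M.zinv φ) ε)).1 = ε.1 :=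
      congrArg Prod.fst (M.zmul_zinv_cancel_left φ ε)
    rcases h with h | h
    · rw [h, fmul0l]
      exact cast0 hxy _
    · rw [h, β0, fmul0r]
      exact cast0 hxy _
  -- key multiplicativity identity
  have key : ∀ φ q : Γ × Λ,
      π (M.zmul φ q).1
          (cast (congrArg (fun p : Γ × Λ => B p.1)
              (M.zmul_zinv_cancel_left φ (M.zmul φ q)))
            (F.fmul (σ φ) (A.β φ.2 (τ (M.zmul (M.zinv φ) (M.zmul φ q)))))) *
        Mrep (M.zmul φ q).2 = f φ * g q := by
    intro φ q
    rw [pi_cast (congrArg Prod.fst (M.zmul_zinv_cancel_left φ (M.zmul φ q)))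
      (congrArg (fun p : Γ × Λ => B p.1) (M.zmul_zinv_cancel_left φ (M.zmul φ q)))
      (F.fmul (σ φ) (A.β φ.2 (τ (M.zmul (M.zinv φ) (M.zmul φ q)))))]
    rw [M.zinv_zmul_cancel_left φ q]
    show π (φ.1 * M.act φ.2 q.1) (F.fmul (σ φ) (A.β φ.2 (τ q))) *
        Mrep (M.res φ.2 q.1 * q.2) = f φ * g q
    rw [hπ_mul, hM_mul, hf, hg]
    rw [mul_assoc, ← mul_assoc (π (M.act φ.2 q.1) (A.β φ.2 (τ q))), ← hcov]
    simp only [mul_assoc]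
  have fstar0 : ∀ (x : Γ), F.fstar (0 : B x) = 0 := by
    intro x
    have h := F.fstar_smul (0 : ℂ) (0 : B x)
    simpa using h
  -- the convolution vanishes off E
  have hconv0 : ∀ ε : Γ × Λ, ε ∉ E → convC M B F A σ τ ε = 0 := by
    intro ε hε
    have hterm : ∀ φ : Γ × Λ,
        cast (congrArg (fun p : Γ × Λ => B p.1) (M.zmul_zinv_cancel_left φ ε))
          (F.fmul (σ φ) (A.β φ.2 (τ (M.zmul (M.zinv φ) ε)))) = 0 := by
      intro φ
      by_cases h1 : σ φ = 0
      · exact term_zero φ ε (Or.inl h1)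
      by_cases h2 : τ (M.zmul (M.zinv φ) ε) = 0
      · exact term_zero φ ε (Or.inr h2)
      exact absurd
        (Finset.mem_image.2 ⟨(φ, M.zmul (M.zinv φ) ε),
          Finset.mem_product.2 ⟨by simpa [hsσ] using h1, by simpa [hsτ] using h2⟩,
          M.zmul_zinv_cancel_left φ ε⟩) hε
    exact (finsum_congr hterm).trans finsum_zero
  -- pull the sum out of `π · * Mrep ·`
  have hεsum : ∀ ε : Γ × Λ, π ε.1 (convC M B F A σ τ ε) * Mrep ε.2
      = ∑ φ ∈ sσ, π ε.1
          (cast (congrArg (fun p : Γ × Λ => B p.1) (M.zmul_zinv_cancel_left φ ε))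
            (F.fmul (σ φ) (A.β φ.2 (τ (M.zmul (M.zinv φ) ε))))) * Mrep ε.2 := by
    intro ε
    have hsupp : (Function.support (fun φ : Γ × Λ =>
        cast (congrArg (fun p : Γ × Λ => B p.1) (M.zmul_zinv_cancel_left φ ε))
          (F.fmul (σ φ) (A.β φ.2 (τ (M.zmul (M.zinv φ) ε)))))).Finite := by
      refine hσ.subset ?_
      intro φ hφ
      simp only [Set.mem_setOf_eq]
      intro h0
      exact hφ (term_zero φ ε (Or.inl h0))
    have hmap := (AddMonoidHom.mk' (fun a : B ε.1 => π ε.1 a * Mrep ε.2)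
      (fun a b => by rw [hπ_add, add_mul])).map_finsum hsupp
    have h1 : π ε.1 (convC M B F A σ τ ε) * Mrep ε.2
        = ∑ᶠ φ : Γ × Λ, π ε.1 (cast (congrArg (fun p : Γ × Λ => B p.1)
            (M.zmul_zinv_cancel_left φ ε))
            (F.fmul (σ φ) (A.β φ.2 (τ (M.zmul (M.zinv φ) ε))))) * Mrep ε.2 := hmap
    rw [h1]
    refine finsum_eq_finset_sum_of_support_subset _ ?_
    intro φ hφ
    simp only [hsσ, Finset.coe_sort_coe, Set.Finite.coe_toFinset, Set.mem_setOf_eq]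
    intro h0
    apply hφ
    show π ε.1 _ * Mrep ε.2 = 0
    rw [term_zero φ ε (Or.inl h0), hπ0, zero_mul]
  have hLconv : Lrep B π Mrep (convC M B F A σ τ)
      = ∑ ε ∈ E, ∑ φ ∈ sσ, π ε.1
          (cast (congrArg (fun p : Γ × Λ => B p.1) (M.zmul_zinv_cancel_left φ ε))
            (F.fmul (σ φ) (A.β φ.2 (τ (M.zmul (M.zinv φ) ε))))) * Mrep ε.2 := by
    refine (finsum_eq_finset_sum_of_support_subset _ ?_).trans
      (Finset.sum_congr rfl fun ε _ => hεsum ε)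
    intro ε hε
    simp only [Finset.coe_sort_coe, Finset.mem_coe]
    by_contra h
    apply hε
    show π ε.1 (convC M B F A σ τ ε) * Mrep ε.2 = 0
    rw [hconv0 ε h, hπ0, zero_mul]
  constructor
  · rw [hLconv, hLσ, hLτ, Finset.sum_comm, Finset.sum_mul_sum]
    refine Finset.sum_congr rfl ?_
    intro φ hφ
    have himg : Finset.image (M.zmul φ) sτ ⊆ E := by
      intro ε hε
      rw [Finset.mem_image] at hε
      obtain ⟨q, hq, rfl⟩ := hε
      exact Finset.mem_image.2 ⟨(φ, q), Finset.mem_product.2 ⟨hφ, hq⟩, rfl⟩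
    have hz : ∀ ε ∈ E, ε ∉ Finset.image (M.zmul φ) sτ →
        π ε.1 (cast (congrArg (fun p : Γ × Λ => B p.1) (M.zmul_zinv_cancel_left φ ε))
            (F.fmul (σ φ) (A.β φ.2 (τ (M.zmul (M.zinv φ) ε))))) * Mrep ε.2 = 0 := by
      intro ε _ hε
      have h2 : τ (M.zmul (M.zinv φ) ε) = 0 := by
        by_contra h2
        exact hε (Finset.mem_image.2 ⟨M.zmul (M.zinv φ) ε, by simpa [hsτ] using h2,
          M.zmul_zinv_cancel_left φ ε⟩)
      rw [term_zero φ ε (Or.inr h2), hπ0, zero_mul]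
    calc (∑ ε ∈ E, π ε.1
            (cast (congrArg (fun p : Γ × Λ => B p.1) (M.zmul_zinv_cancel_left φ ε))
              (F.fmul (σ φ) (A.β φ.2 (τ (M.zmul (M.zinv φ) ε))))) * Mrep ε.2)
        = ∑ ε ∈ Finset.image (M.zmul φ) sτ, π ε.1
            (cast (congrArg (fun p : Γ × Λ => B p.1) (M.zmul_zinv_cancel_left φ ε))
              (F.fmul (σ φ) (A.β φ.2 (τ (M.zmul (M.zinv φ) ε))))) * Mrep ε.2 :=
          (Finset.sum_subset himg hz).symm
      _ = ∑ q ∈ sτ, π (M.zmul φ q).1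
            (cast (congrArg (fun p : Γ × Λ => B p.1)
                (M.zmul_zinv_cancel_left φ (M.zmul φ q)))
              (F.fmul (σ φ) (A.β φ.2 (τ (M.zmul (M.zinv φ) (M.zmul φ q)))))) *
            Mrep (M.zmul φ q).2 :=
          Finset.sum_image (fun a _ b _ h => M.zmul_left_injective φ h)
      _ = ∑ q ∈ sτ, f φ * g q := Finset.sum_congr rfl fun q _ => key φ q
  · have keystar : ∀ p : Γ × Λ,
        π (M.zinv p).1 (starC M B F A σ (M.zinv p)) * Mrep (M.zinv p).2 = star (f p) := by
      intro p
      rw [show starC M B F A σ (M.zinv p)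
          = cast (congrArg B (M.zs_star_base (M.zinv p).1 (M.zinv p).2))
              (A.β (M.res (M.zinv p).2⁻¹ (M.zinv p).1⁻¹)⁻¹
                (F.fstar (σ (M.zinv (M.zinv p))))) from rfl]
      rw [pi_cast (M.zs_star_base (M.zinv p).1 (M.zinv p).2) _ _]
      show π (M.act (M.zinv (M.zinv p)).2⁻¹ (M.zinv (M.zinv p)).1⁻¹)
          (A.β (M.zinv (M.zinv p)).2⁻¹ (F.fstar (σ (M.zinv (M.zinv p))))) *
            Mrep (M.zinv p).2 = star (f p)
      rw [M.zinv_zinv p]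
      show π (M.act p.2⁻¹ p.1⁻¹) (A.β p.2⁻¹ (F.fstar (σ p))) *
          Mrep (M.res p.2⁻¹ p.1⁻¹) = star (π p.1 (σ p) * Mrep p.2)
      rw [star_mul, ContinuousLinearMap.star_eq_adjoint, ContinuousLinearMap.star_eq_adjoint,
        hM_star, ← hπ_star, hcov]
    have hLstar : Lrep B π Mrep (starC M B F A σ)
        = ∑ ε ∈ Finset.image M.zinv sσ, π ε.1 (starC M B F A σ ε) * Mrep ε.2 := by
      refine finsum_eq_finset_sum_of_support_subset _ ?_
      intro ε hε
      by_contra h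
      apply hε
      have h0 : σ (M.zinv ε) = 0 := by
        by_contra h0
        apply h
        refine Finset.mem_coe.2 (Finset.mem_image.2 ⟨M.zinv ε, ?_, M.zinv_zinv ε⟩)
        simpa [hsσ] using h0
      show π ε.1 (starC M B F A σ ε) * Mrep ε.2 = 0
      rw [show starC M B F A σ ε = cast (congrArg B (M.zs_star_base ε.1 ε.2))
          (A.β (M.res ε.2⁻¹ ε.1⁻¹)⁻¹ (F.fstar (σ (M.zinv ε)))) from rfl,
        h0, (show F.fstar (x := M.act ε.2⁻¹ ε.1⁻¹) (0 : B (M.zinv ε).1) = 0 from fstar0 _), β0, cast0 (M.zs_star_base ε.1 ε.2), hπ0, zero_mul]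
    rw [hLstar, Finset.sum_image (fun a _ b _ h => M.zinv_injective h), hLσ,
      ← ContinuousLinearMap.star_eq_adjoint, star_sum]
    exact Finset.sum_congr rfl fun p _ => keystar p
end Stmt19
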